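/- arXiv:2506.23375 — 2 statements merged into one kernel-verified Lean document; each statement's English description precedes it below -/
import Mathlib

section
/- Let C be a cancellative commutative monoid (a + e = b + e implies a = b), V a vertex set, and E_X, E_Y edge sets with source and target maps s, t : E_X ⊕ E_Y → V; write X ∪ Y for the graph with edges E_X ⊕ E_Y on vertex set V. Then for every 1-cycle c ∈ H₁(X∪Y,C), if C[s](p_X(c)) = C[t](p_X(c)) then also C[s](p_Y(c)) = C[t](p_Y(c)). Consequently the image of ι : H₁(X,C) ⊕ H₁(Y,C) → H₁(X∪Y,C), ι(a,b) = a + b, is exactly the set of c ∈ H₁(X∪Y,C) with C[s](p_X(c)) = C[t](p_X(c)) (and likewise with p_X replaced by p_Y). -/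
/-- The first homology `H₁(G,C)` of a graph `G = (E,V,s,t)` with coefficients in a commutative
monoid `C`: the additive submonoid of 1-cycles in `C₁(G,C) = E →₀ C`, i.e. those `c` with
`C[s](c) = C[t](c)`. -/
noncomputable def graphH1 {E V : Type*} (C : Type*) [AddCommMonoid C] (s t : E → V) :
    AddSubmonoid (E →₀ C) where
  carrier := {c | Finsupp.mapDomain s c = Finsupp.mapDomain t c}
  add_mem' := by
    intro a b ha hb
    simp only [Set.mem_setOf_eq, Finsupp.mapDomain_add] at *
    rw [ha, hb]
  zero_mem' := by
    simp only [Set.mem_setOf_eq, Finsupp.mapDomain_zero]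

/-- The part `p_X(c)` of a 1-chain on the edge set `E_X ⊕ E_Y` supported on `E_X`. -/
noncomputable def projX {EX EY C : Type*} [AddCommMonoid C] (c : (EX ⊕ EY) →₀ C) :
    (EX ⊕ EY) →₀ C :=
  Finsupp.filter (fun e => e.isLeft) c

/-- The part `p_Y(c)` of a 1-chain on the edge set `E_X ⊕ E_Y` supported on `E_Y`. -/
noncomputable def projY {EX EY C : Type*} [AddCommMonoid C] (c : (EX ⊕ EY) →₀ C) :
    (EX ⊕ EY) →₀ C :=
  Finsupp.filter (fun e => e.isRight) c

/-- `H₁(X,C)` regarded as a submonoid of `C₁(X ∪ Y, C)`: the 1-cycles supported on `E_X`. -/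
noncomputable def graphH1X {EX EY V : Type*} (C : Type*) [AddCommMonoid C]
    (s t : EX ⊕ EY → V) : AddSubmonoid ((EX ⊕ EY) →₀ C) where
  carrier := {c | (Finsupp.mapDomain s c = Finsupp.mapDomain t c) ∧
    ∀ e : EY, c (Sum.inr e) = 0}
  add_mem' := by
    intro a b ha hb
    refine ⟨?_, fun e => ?_⟩
    · simp only [Set.mem_setOf_eq, Finsupp.mapDomain_add] at *
      rw [ha.1, hb.1]
    · simp [Finsupp.add_apply, ha.2 e, hb.2 e]
  zero_mem' := by
    simp [Finsupp.mapDomain_zero]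

/-- `H₁(Y,C)` regarded as a submonoid of `C₁(X ∪ Y, C)`: the 1-cycles supported on `E_Y`. -/
noncomputable def graphH1Y {EX EY V : Type*} (C : Type*) [AddCommMonoid C]
    (s t : EX ⊕ EY → V) : AddSubmonoid ((EX ⊕ EY) →₀ C) where
  carrier := {c | (Finsupp.mapDomain s c = Finsupp.mapDomain t c) ∧
    ∀ e : EX, c (Sum.inl e) = 0}
  add_mem' := by
    intro a b ha hb
    refine ⟨?_, fun e => ?_⟩
    · simp only [Set.mem_setOf_eq, Finsupp.mapDomain_add] at *
      rw [ha.1, hb.1]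
    · simp [Finsupp.add_apply, ha.2 e, hb.2 e]
  zero_mem' := by
    simp [Finsupp.mapDomain_zero]

/-- Mayer–Vietoris, cancellative case: if `C` is a cancellative commutative
monoid, then for every 1-cycle `c` of `X ∪ Y`, if `p_X(c)` is a 1-cycle then so is `p_Y(c)`;
consequently the image of `ι : H₁(X,C) ⊕ H₁(Y,C) → H₁(X∪Y,C)`, `ι(a,b) = a + b`, is exactly
the set of 1-cycles `c` with `C[s](p_X c) = C[t](p_X c)` — and likewise with `p_Y`. -/
theorem mayer_vietoris_cancellative
    {C V EX EY : Type*} [AddCommMonoid C]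
    (hcancel : ∀ a b e : C, a + e = b + e → a = b)
    (s t : EX ⊕ EY → V) :
    (∀ c ∈ graphH1 C s t,
      Finsupp.mapDomain s (projX c) = Finsupp.mapDomain t (projX c) →
      Finsupp.mapDomain s (projY c) = Finsupp.mapDomain t (projY c)) ∧
    (∀ c ∈ graphH1 C s t,
      (Finsupp.mapDomain s (projX c) = Finsupp.mapDomain t (projX c) ↔
        ∃ a ∈ graphH1X C s t, ∃ b ∈ graphH1Y C s t, c = a + b)) ∧
    (∀ c ∈ graphH1 C s t,
      (Finsupp.mapDomain s (projY c) = Finsupp.mapDomain t (projY c) ↔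
        ∃ a ∈ graphH1X C s t, ∃ b ∈ graphH1Y C s t, c = a + b)) := by
  have hsplit : ∀ c : (EX ⊕ EY) →₀ C, projX c + projY c = c := by
    intro c
    ext e
    cases e <;> simp [projX, projY, Finsupp.filter_apply]
  have hcancelF : ∀ f g h : V →₀ C, f + h = g + h → f = g := by
    intro f g h hfg
    ext v
    exact hcancel _ _ (h v) (by simpa [Finsupp.add_apply] using DFunLike.congr_fun hfg v)
  have hsum : ∀ c ∈ graphH1 C s t,
      Finsupp.mapDomain s (projX c) + Finsupp.mapDomain s (projY c)
        = Finsupp.mapDomain t (projX c) + Finsupp.mapDomain t (projY c) := by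
    intro c hc
    rw [← Finsupp.mapDomain_add, ← Finsupp.mapDomain_add, hsplit]
    exact hc
  have key : ∀ c ∈ graphH1 C s t,
      Finsupp.mapDomain s (projX c) = Finsupp.mapDomain t (projX c) →
      Finsupp.mapDomain s (projY c) = Finsupp.mapDomain t (projY c) := by
    intro c hc hX
    have h1 := hsum c hc
    rw [hX] at h1
    exact hcancelF _ _ (Finsupp.mapDomain t (projX c))
      (by rw [add_comm (Finsupp.mapDomain s (projY c)), add_comm (Finsupp.mapDomain t (projY c))]; exact h1)
  have keyY : ∀ c ∈ graphH1 C s t,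
      Finsupp.mapDomain s (projY c) = Finsupp.mapDomain t (projY c) →
      Finsupp.mapDomain s (projX c) = Finsupp.mapDomain t (projX c) := by
    intro c hc hY
    have h1 := hsum c hc
    rw [hY] at h1
    exact hcancelF _ _ _ h1
  have hdecomp : ∀ c, ∀ a ∈ graphH1X C s t, ∀ b ∈ graphH1Y C s t, c = a + b →
      projX c = a ∧ projY c = b := by
    intro c a ha b hb hab
    subst hab
    constructor
    · ext e
      cases e with
      | inl x => simp [projX, Finsupp.filter_apply, Finsupp.add_apply, hb.2 x]
      | inr y => simp [projX, Finsupp.filter_apply, ha.2 y]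
    · ext e
      cases e with
      | inl x => simp [projY, Finsupp.filter_apply, hb.2 x]
      | inr y => simp [projY, Finsupp.filter_apply, Finsupp.add_apply, ha.2 y]
  have main : ∀ c ∈ graphH1 C s t,
      (Finsupp.mapDomain s (projX c) = Finsupp.mapDomain t (projX c) ↔
        ∃ a ∈ graphH1X C s t, ∃ b ∈ graphH1Y C s t, c = a + b) := by
    intro c hc
    constructor
    · intro hX
      exact ⟨projX c, ⟨hX, fun e => by simp [projX, Finsupp.filter_apply]⟩,
        projY c, ⟨key c hc hX, fun e => by simp [projY, Finsupp.filter_apply]⟩,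
        (hsplit c).symm⟩
    · rintro ⟨a, ha, b, hb, rfl⟩
      rw [(hdecomp _ a ha b hb rfl).1]
      exact ha.1
  refine ⟨key, main, fun c hc => ?_⟩
  constructor
  · intro hY
    exact (main c hc).1 (keyY c hc hY)
  · rintro ⟨a, ha, b, hb, rfl⟩
    rw [(hdecomp _ a ha b hb rfl).2]
    exact hb.1
end

section
/- Let C be a cancellative commutative monoid, V a vertex set, E_X, E_Y edge sets with source and target maps s, t : E_X ⊕ E_Y → V, and suppose there are subsets V_X, V_Y ⊆ V with V = V_X ∪ V_Y such that every edge in E_X has source and target in V_X and every edge in E_Y has source and target in V_Y. Let q : (V →₀ C) → (V →₀ C) be the additive monoid homomorphism that keeps the coefficient of every vertex in V_X ∩ V_Y and sends the coefficients of all other vertices to 0. Then for every 1-cycle c ∈ H₁(X∪Y,C): q(C[s](p_X(c))) = q(C[t](p_X(c))) if and only if c lies in the image of ι : H₁(X,C) ⊕ H₁(Y,C) → H₁(X∪Y,C), ι(a,b) = a + b; and the same holds with p_X replaced by p_Y. -/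
private lemma mvq_mapDomain_zero {E V C : Type*} [AddCommMonoid C] {s : E → V}
    {f : E →₀ C} {v : V} (h : ∀ a ∈ f.support, s a ≠ v) :
    Finsupp.mapDomain s f v = 0 := by
  classical
  rw [Finsupp.mapDomain, Finsupp.sum_apply]
  refine Finset.sum_eq_zero fun a ha => ?_
  simp only [Finsupp.single_apply]
  exact if_neg (h a ha)

/-- Mayer–Vietoris, second form: suppose moreover that `V = V_X ∪ V_Y`, every
edge of `X` has endpoints in `V_X` and every edge of `Y` has endpoints in `V_Y`; let `q` be
the homomorphism on 0-chains keeping the coefficients of vertices in `V_X ∩ V_Y` and killing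
the rest.  If `C` is cancellative, then a 1-cycle `c` of `X ∪ Y` satisfies
`q(C[s](p_X c)) = q(C[t](p_X c))` iff `c` lies in the image of
`ι : H₁(X,C) ⊕ H₁(Y,C) → H₁(X∪Y,C)`, `ι(a,b) = a + b`; and likewise with `p_Y`. -/
theorem mayer_vietoris_with_q
    {C V EX EY : Type*} [AddCommMonoid C]
    (hcancel : ∀ a b e : C, a + e = b + e → a = b)
    (s t : EX ⊕ EY → V)
    (VX VY : Set V) [DecidablePred (· ∈ VX ∩ VY)]
    (hunion : VX ∪ VY = Set.univ)
    (hX : ∀ e : EX, s (Sum.inl e) ∈ VX ∧ t (Sum.inl e) ∈ VX)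
    (hY : ∀ e : EY, s (Sum.inr e) ∈ VY ∧ t (Sum.inr e) ∈ VY) :
    ∀ c ∈ graphH1 C s t,
      ((Finsupp.filter (· ∈ VX ∩ VY) (Finsupp.mapDomain s (projX c)) =
          Finsupp.filter (· ∈ VX ∩ VY) (Finsupp.mapDomain t (projX c)) ↔
        ∃ a ∈ graphH1X C s t, ∃ b ∈ graphH1Y C s t, c = a + b) ∧
      (Finsupp.filter (· ∈ VX ∩ VY) (Finsupp.mapDomain s (projY c)) =
          Finsupp.filter (· ∈ VX ∩ VY) (Finsupp.mapDomain t (projY c)) ↔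
        ∃ a ∈ graphH1X C s t, ∃ b ∈ graphH1Y C s t, c = a + b)) := by
  
  classical
  intro c hc
  have hsplit : projX c + projY c = c := by
    ext e
    cases e <;> simp [projX, projY, Finsupp.filter_apply]
  have hcyc : ∀ v, Finsupp.mapDomain s (projX c) v + Finsupp.mapDomain s (projY c) v
      = Finsupp.mapDomain t (projX c) v + Finsupp.mapDomain t (projY c) v := by
    intro v
    have h := DFunLike.congr_fun (hc : Finsupp.mapDomain s c = Finsupp.mapDomain t c) v
    rw [← hsplit, Finsupp.mapDomain_add, Finsupp.mapDomain_add] at h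
    simpa using h
  have hsuppX : ∀ a ∈ (projX c).support, a.isLeft := by
    intro a ha
    by_contra h
    exact Finsupp.mem_support_iff.mp ha (by rw [projX, Finsupp.filter_apply, if_neg h])
  have hsuppY : ∀ a ∈ (projY c).support, a.isRight := by
    intro a ha
    by_contra h
    exact Finsupp.mem_support_iff.mp ha (by rw [projY, Finsupp.filter_apply, if_neg h])
  have hXs : ∀ v ∉ VX, Finsupp.mapDomain s (projX c) v = 0 := by
    intro v hv
    refine mvq_mapDomain_zero fun a ha => ?_
    obtain ⟨e, rfl⟩ := Sum.isLeft_iff.mp (hsuppX a ha)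
    exact fun h => hv (h ▸ (hX e).1)
  have hXt : ∀ v ∉ VX, Finsupp.mapDomain t (projX c) v = 0 := by
    intro v hv
    refine mvq_mapDomain_zero fun a ha => ?_
    obtain ⟨e, rfl⟩ := Sum.isLeft_iff.mp (hsuppX a ha)
    exact fun h => hv (h ▸ (hX e).2)
  have hYs : ∀ v ∉ VY, Finsupp.mapDomain s (projY c) v = 0 := by
    intro v hv
    refine mvq_mapDomain_zero fun a ha => ?_
    obtain ⟨e, rfl⟩ := Sum.isRight_iff.mp (hsuppY a ha)
    exact fun h => hv (h ▸ (hY e).1)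
  have hYt : ∀ v ∉ VY, Finsupp.mapDomain t (projY c) v = 0 := by
    intro v hv
    refine mvq_mapDomain_zero fun a ha => ?_
    obtain ⟨e, rfl⟩ := Sum.isRight_iff.mp (hsuppY a ha)
    exact fun h => hv (h ▸ (hY e).2)
  have keyX : Finsupp.filter (· ∈ VX ∩ VY) (Finsupp.mapDomain s (projX c)) =
      Finsupp.filter (· ∈ VX ∩ VY) (Finsupp.mapDomain t (projX c)) →
      Finsupp.mapDomain s (projX c) = Finsupp.mapDomain t (projX c) := by
    intro hq
    ext v
    by_cases hv : v ∈ VX ∩ VY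
    · have h := DFunLike.congr_fun hq v
      rwa [Finsupp.filter_apply_pos _ _ hv, Finsupp.filter_apply_pos _ _ hv] at h
    · by_cases hvX : v ∈ VX
      · have hvY : v ∉ VY := fun h => hv ⟨hvX, h⟩
        have h1 := hcyc v
        rwa [hYs v hvY, hYt v hvY, add_zero, add_zero] at h1
      · rw [hXs v hvX, hXt v hvX]
  have keyY : Finsupp.filter (· ∈ VX ∩ VY) (Finsupp.mapDomain s (projY c)) =
      Finsupp.filter (· ∈ VX ∩ VY) (Finsupp.mapDomain t (projY c)) →
      Finsupp.mapDomain s (projY c) = Finsupp.mapDomain t (projY c) := by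
    intro hq
    ext v
    by_cases hv : v ∈ VX ∩ VY
    · have h := DFunLike.congr_fun hq v
      rwa [Finsupp.filter_apply_pos _ _ hv, Finsupp.filter_apply_pos _ _ hv] at h
    · by_cases hvY : v ∈ VY
      · have hvX : v ∉ VX := fun h => hv ⟨h, hvY⟩
        have h1 := hcyc v
        rwa [hXs v hvX, hXt v hvX, zero_add, zero_add] at h1
      · rw [hYs v hvY, hYt v hvY]
  have crossXY : Finsupp.mapDomain s (projX c) = Finsupp.mapDomain t (projX c) →
      Finsupp.mapDomain s (projY c) = Finsupp.mapDomain t (projY c) := by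
    intro h
    ext v
    have h1 := hcyc v
    rw [DFunLike.congr_fun h v, add_comm, add_comm (Finsupp.mapDomain t (projX c) v)] at h1
    exact hcancel _ _ _ h1
  have crossYX : Finsupp.mapDomain s (projY c) = Finsupp.mapDomain t (projY c) →
      Finsupp.mapDomain s (projX c) = Finsupp.mapDomain t (projX c) := by
    intro h
    ext v
    have h1 := hcyc v
    rw [DFunLike.congr_fun h v] at h1
    exact hcancel _ _ _ h1
  have fwd : Finsupp.mapDomain s (projX c) = Finsupp.mapDomain t (projX c) →
      ∃ a ∈ graphH1X C s t, ∃ b ∈ graphH1Y C s t, c = a + b := by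
    intro h
    refine ⟨projX c, ⟨h, fun e => ?_⟩, projY c, ⟨crossXY h, fun e => ?_⟩, hsplit.symm⟩
    · simp [projX, Finsupp.filter_apply]
    · simp [projY, Finsupp.filter_apply]
  have bwd : (∃ a ∈ graphH1X C s t, ∃ b ∈ graphH1Y C s t, c = a + b) →
      Finsupp.mapDomain s (projX c) = Finsupp.mapDomain t (projX c) := by
    rintro ⟨a, ha, b, hb, rfl⟩
    have hpa : projX (a + b) = a := by
      ext e
      cases e with
      | inl e => simp [projX, Finsupp.filter_apply, hb.2 e]
      | inr e => simp [projX, Finsupp.filter_apply, ha.2 e]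
    rw [hpa]
    exact ha.1
  refine ⟨⟨fun hq => fwd (keyX hq), fun h => ?_⟩, ⟨fun hq => fwd (crossYX (keyY hq)), fun h => ?_⟩⟩
  · rw [bwd h]
  · rw [crossXY (bwd h)]
end
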